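/- In the group ring ℤ[x, x⁻¹] of Laurent polynomials, suppose ≺ is a linear order making (ℤ[x,x⁻¹], +) an ordered abelian group which is invariant under multiplication by x, and suppose 1 ≻ 0 and x ≪ 1 (i.e., n•x ≺ 1 for all positive integers n, and more generally multiplication by x strictly decreases Archimedean class). Then a nonzero f(x) = Σ aᵢ xⁱ satisfies f ≻ 0 if and only if the coefficient a_k of its lowest-degree term is positive. -/

import Mathlib

open LaurentPolynomial

/-- For an `⟨x⟩`-invariant order `≺` on the Laurent polynomials
`ℤ[T;T⁻¹]` with `1 ≻ 0` and `x ≪ 1`, a nonzero `f` is positive iff the coefficient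
of its lowest-degree term is positive.  The strict order is given as a relation `r`
(where `r f g` means `f ≺ g`). -/
theorem stmt12 (r : LaurentPolynomial ℤ → LaurentPolynomial ℤ → Prop)
    (htotal : ∀ f g, r f g ∨ f = g ∨ r g f)
    (hirr : ∀ f, ¬ r f f)
    (htrans : ∀ f g h, r f g → r g h → r f h)
    (hadd : ∀ f g h, r f g → r (f + h) (g + h))
    (hxinv : ∀ f g, r f g → r (T 1 * f) (T 1 * g))
    (hone : r 0 1)
    -- `x ≪ 1`: every positive integer multiple of `|x|` is below `1`
    (hll : ∀ n : ℕ, 0 < n → r (n • T 1) 1 ∧ r (n • (-(T 1))) 1) :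
    ∀ f : LaurentPolynomial ℤ, ∀ hf : f ≠ 0,
      (r 0 f ↔ 0 < f.coeff (f.coeff.support.min'
        (Finsupp.support_nonempty_iff.mpr (fun h => hf (AddMonoidAlgebra.coeff_eq_zero.mp h))))) := by
  have Tapply : ∀ (n : ℤ) (f : LaurentPolynomial ℤ) (m : ℤ),
      (T n * f : LaurentPolynomial ℤ).coeff m = f.coeff (m - n) := by
    intro n f m
    have h : (T n * f : LaurentPolynomial ℤ) = AddMonoidAlgebra.single n 1 * f := rfl
    rw [h, AddMonoidAlgebra.coeff_single_mul_apply, one_mul]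
    ring_nf
  have TT : ∀ (n : ℤ) (f : LaurentPolynomial ℤ), T n * (T (-n) * f) = f := by
    intro n f; rw [← mul_assoc, ← T_add, add_neg_cancel, T_zero, one_mul]
  have TT' : ∀ (n : ℤ) (f : LaurentPolynomial ℤ), T (-n) * (T n * f) = f := by
    intro n f
    have := TT (-n) f
    rwa [neg_neg] at this
  have hsum : ∀ a b, r 0 a → r 0 b → r 0 (a + b) := by
    intro a b ha hb
    have h := hadd _ _ b ha
    rw [zero_add] at h
    exact htrans _ _ _ hb h
  have hmulTnat : ∀ (n : ℕ) (f g : LaurentPolynomial ℤ), r f g →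
      r (T (n : ℤ) * f) (T (n : ℤ) * g) := by
    intro n
    induction n with
    | zero => intro f g H; simpa using H
    | succ k ih =>
      intro f g H
      have H2 := hxinv _ _ (ih f g H)
      rw [← mul_assoc, ← mul_assoc, ← T_add] at H2
      have e : (1 : ℤ) + (k : ℤ) = ((k + 1 : ℕ) : ℤ) := by push_cast; ring
      rwa [e] at H2
  have hmulT : ∀ (n : ℤ) (f g : LaurentPolynomial ℤ), r f g → r (T n * f) (T n * g) := by
    intro n f g H
    rcases le_or_gt 0 n with hn | hn
    · have h := hmulTnat n.toNat f g H
      rwa [Int.toNat_of_nonneg hn] at h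
    · rcases htotal (T n * f) (T n * g) with h1 | h1 | h1
      · exact h1
      · exfalso
        have h2 : f = g := by
          have h3 := congrArg (fun p => T (-n) * p) h1
          simpa [TT'] using h3
        exact hirr g (h2 ▸ H)
      · exfalso
        have H3 := hmulTnat (-n).toNat _ _ h1
        rw [Int.toNat_of_nonneg (by omega)] at H3
        rw [TT', TT'] at H3
        exact hirr f (htrans _ _ _ H H3)
  have hzT : ∀ n : ℤ, r 0 (T n) := by
    intro n
    have h := hmulT n 0 1 hone
    rwa [mul_zero, mul_one] at h
  have hT1lt1 : r (T 1) 1 := by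
    have h := (hll 1 one_pos).1
    rwa [one_smul] at h
  have hTle : ∀ m : ℕ, T (m : ℤ) = (1 : LaurentPolynomial ℤ) ∨ r (T (m : ℤ)) 1 := by
    intro m
    induction m with
    | zero => left; exact T_zero
    | succ k ih =>
      right
      have h2 : r (T (k : ℤ) * T 1) (T (k : ℤ) * 1) := hmulT _ _ _ hT1lt1
      rw [mul_one, ← T_add] at h2
      have e : (k : ℤ) + 1 = ((k + 1 : ℕ) : ℤ) := by push_cast; ring
      rw [e] at h2
      rcases ih with h | h
      · rwa [h] at h2
      · exact htrans _ _ _ h2 h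
  have hM : ∀ d : ℤ, 1 ≤ d → ∀ n : ℕ, 0 < n →
      r (n • T d) 1 ∧ r (n • (-(T d))) 1 := by
    intro d hd n hn
    obtain ⟨h1, h2⟩ := hll n hn
    have hTd : T ((d - 1).toNat : ℤ) = (1 : LaurentPolynomial ℤ) ∨
        r (T ((d - 1).toNat : ℤ)) 1 := hTle (d - 1).toNat
    rw [Int.toNat_of_nonneg (by omega)] at hTd
    constructor
    · have h3 := hmulT (d - 1) _ _ h1
      rw [mul_one, mul_smul_comm, ← T_add, show d - 1 + 1 = d by ring] at h3
      rcases hTd with h | h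
      · rwa [h] at h3
      · exact htrans _ _ _ h3 h
    · have h4 := hmulT (d - 1) _ _ h2
      rw [mul_one, mul_smul_comm, mul_neg, ← T_add, show d - 1 + 1 = d by ring] at h4
      rcases hTd with h | h
      · rwa [h] at h4
      · exact htrans _ _ _ h4 h
  have smulC : ∀ (b : ℤ) (v : LaurentPolynomial ℤ), b • v = C b * v := by
    intro b v
    rw [zsmul_eq_mul, eq_intCast C b]
  -- main inductive lemma: everything supported in degrees ≥ d+1 is below T d
  have hL : ∀ N : ℕ, ∀ p : LaurentPolynomial ℤ, p.coeff.support.card ≤ N →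
      ∀ d : ℤ, 0 ≤ d → (∀ e ∈ p.coeff.support, d + 1 ≤ e) → r p (T d) := by
    intro N
    induction N with
    | zero =>
      intro p hcard d _ _
      have hp : p = 0 := by
        rw [← AddMonoidAlgebra.coeff_eq_zero, ← Finsupp.support_eq_empty]
        exact Finset.card_eq_zero.mp (le_antisymm hcard (Nat.zero_le _))
      rw [hp]
      exact hzT d
    | succ N ih =>
      intro p hcard d hd hsupp
      by_cases hp : p = 0
      · rw [hp]; exact hzT d
      · have hne : p.coeff.support.Nonempty := (Finsupp.support_nonempty_iff.mpr (fun h => hp (AddMonoidAlgebra.coeff_eq_zero.mp h)))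
        set m := p.coeff.support.min' hne with hm
        have hmmem : m ∈ p.coeff.support := Finset.min'_mem _ _
        have hdm : d + 1 ≤ m := hsupp m hmmem
        set c := p.coeff m with hc
        obtain ⟨q, hq⟩ : ∃ q : LaurentPolynomial ℤ, q = AddMonoidAlgebra.erase m p := ⟨_, rfl⟩
        have hpq : C c * T m + q = p := by
          rw [hc, hq, ← single_eq_C_mul_T]
          exact AddMonoidAlgebra.single_add_erase m p
        have hqsupp : q.coeff.support = p.coeff.support.erase m := by
          rw [hq]; exact Finsupp.support_erase
        have hqcard : q.coeff.support.card ≤ N := by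
          rw [hqsupp, Finset.card_erase_of_mem hmmem]
          omega
        have hqdeg : ∀ e ∈ q.coeff.support, m + 1 ≤ e := by
          intro e he
          rw [hqsupp, Finset.mem_erase] at he
          have h5 := Finset.min'_le _ _ he.2
          rw [← hm] at h5
          omega
        have hqr : r q (T m) := ih q hqcard m (by omega) hqdeg
        have h1 : r (q + C c * T m) (T m + C c * T m) := hadd _ _ _ hqr
        have e1 : q + C c * T m = p := by rw [add_comm]; exact hpq
        have e2 : (T m : LaurentPolynomial ℤ) + C c * T m = C (1 + c) * T m := by
          rw [map_add, map_one, add_mul, one_mul]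
        rw [e1, e2] at h1
        have key : T d * ((1 + c) • T (m - d)) = C (1 + c) * T m := by
          rw [mul_smul_comm, ← T_add, show d + (m - d) = m by ring, smulC]
        rcases lt_trichotomy (1 + c) 0 with hcc | hcc | hcc
        · have hM2 := (hM (m - d) (by omega) (-(1 + c)).toNat (by omega)).2
          have e3 : ((-(1 + c)).toNat) • (-(T (m - d)) : LaurentPolynomial ℤ)
              = (1 + c) • T (m - d) := by
            rw [← natCast_zsmul, Int.toNat_of_nonneg (by omega), neg_smul, smul_neg, neg_neg]
          rw [e3] at hM2
          have h6 := hmulT d _ _ hM2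
          rw [mul_one, key] at h6
          exact htrans _ _ _ h1 h6
        · rw [hcc, map_zero, zero_mul] at h1
          exact htrans _ _ _ h1 (hzT d)
        · have hM1 := (hM (m - d) (by omega) (1 + c).toNat (by omega)).1
          have e3 : ((1 + c).toNat) • (T (m - d) : LaurentPolynomial ℤ)
              = (1 + c) • T (m - d) := by
            rw [← natCast_zsmul, Int.toNat_of_nonneg (by omega)]
          rw [e3] at hM1
          have h6 := hmulT d _ _ hM1
          rw [mul_one, key] at h6
          exact htrans _ _ _ h1 h6
  have hCpos : ∀ b : ℤ, 0 < b → r 0 (C b : LaurentPolynomial ℤ) := by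
    have hns : ∀ n : ℕ, r 0 ((n + 1) • (1 : LaurentPolynomial ℤ)) := by
      intro n
      induction n with
      | zero => simpa using hone
      | succ k ih =>
        rw [succ_nsmul]
        exact hsum _ _ ih hone
    intro b hb
    obtain ⟨n, hn⟩ : ∃ n : ℕ, b = (n : ℤ) + 1 := ⟨(b - 1).toNat, by omega⟩
    have h := hns n
    have e : ((n + 1) • (1 : LaurentPolynomial ℤ)) = C b := by
      have h1 : (C b : LaurentPolynomial ℤ) = b • 1 := by
        rw [zsmul_one]; exact eq_intCast C b
      rw [h1, ← natCast_zsmul]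
      congr 1
      omega
    rwa [e] at h
  -- the key positivity direction
  have POS : ∀ f : LaurentPolynomial ℤ, ∀ hf : f ≠ 0,
      0 < f.coeff (f.coeff.support.min' (Finsupp.support_nonempty_iff.mpr (fun h => hf (AddMonoidAlgebra.coeff_eq_zero.mp h)))) → r 0 f := by
    intro f hf hpos
    set k := f.coeff.support.min' (Finsupp.support_nonempty_iff.mpr (fun h => hf (AddMonoidAlgebra.coeff_eq_zero.mp h))) with hk
    set a := f.coeff k with ha
    set g := T (-k) * f with hg
    have hga : g.coeff 0 = a := by
      rw [hg, Tapply, show (0 : ℤ) - -k = k by ring, ha]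
    have hfg : T k * g = f := by rw [hg, TT]
    have hgsupp : ∀ e ∈ g.coeff.support, 0 ≤ e := by
      intro e he
      rw [Finsupp.mem_support_iff] at he
      rw [hg, Tapply] at he
      have h1 : e - -k ∈ f.coeff.support := Finsupp.mem_support_iff.mpr he
      have h2 := Finset.min'_le _ _ h1
      rw [← hk] at h2
      omega
    have hpos' : 0 < a := hpos
    obtain ⟨q, hq⟩ : ∃ q : LaurentPolynomial ℤ, q = AddMonoidAlgebra.erase 0 g := ⟨_, rfl⟩
    have hgq : (C a : LaurentPolynomial ℤ) + q = g := by
      rw [hq, ← single_eq_C, ← hga]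
      exact AddMonoidAlgebra.single_add_erase 0 g
    have hqdeg : ∀ e ∈ (-q).coeff.support, (0 : ℤ) + 1 ≤ e := by
      intro e he
      rw [AddMonoidAlgebra.coeff_neg, Finsupp.support_neg, hq, AddMonoidAlgebra.coeff_erase,
        Finsupp.support_erase, Finset.mem_erase] at he
      have := hgsupp e he.2
      omega
    have hnq : r (-q) (T 0) := hL (-q).coeff.support.card _ le_rfl 0 le_rfl hqdeg
    rw [T_zero] at hnq
    have hCa : r (-q) (C a : LaurentPolynomial ℤ) := by
      rcases eq_or_lt_of_le (show (1 : ℤ) ≤ a by omega) with h | h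
      · rw [← h, map_one]
        exact hnq
      · have h1 : r 0 (C (a - 1) : LaurentPolynomial ℤ) := hCpos (a - 1) (by omega)
        have h2 := hadd _ _ 1 h1
        rw [zero_add] at h2
        have e1 : (C (a - 1) : LaurentPolynomial ℤ) + 1 = C a := by
          rw [← map_one C, ← map_add]
          norm_num
        rw [e1] at h2
        exact htrans _ _ _ hnq h2
    have h3 := hadd _ _ q hCa
    rw [neg_add_cancel, hgq] at h3
    have h4 := hmulT k _ _ h3
    rwa [mul_zero, hfg] at h4
  -- conclusion
  intro f hf
  constructor
  · intro hrf
    by_contra hna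
    push_neg at hna
    have hane : f.coeff (f.coeff.support.min' (Finsupp.support_nonempty_iff.mpr (fun h => hf (AddMonoidAlgebra.coeff_eq_zero.mp h)))) ≠ 0 :=
      Finsupp.mem_support_iff.mp (Finset.min'_mem _ _)
    have hnf : -f ≠ 0 := neg_ne_zero.mpr hf
    have hsupp : (-f).coeff.support = f.coeff.support := Finsupp.support_neg f.coeff
    have hmin : (-f).coeff.support.min' (Finsupp.support_nonempty_iff.mpr (fun h => hnf (AddMonoidAlgebra.coeff_eq_zero.mp h)))
        = f.coeff.support.min' (Finsupp.support_nonempty_iff.mpr (fun h => hf (AddMonoidAlgebra.coeff_eq_zero.mp h))) := by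
      simp only [hsupp]
    have hposval : 0 < (-f).coeff ((-f).coeff.support.min' (Finsupp.support_nonempty_iff.mpr (fun h => hnf (AddMonoidAlgebra.coeff_eq_zero.mp h)))) := by
      rw [hmin]
      have : (-f).coeff (f.coeff.support.min' (Finsupp.support_nonempty_iff.mpr (fun h => hf (AddMonoidAlgebra.coeff_eq_zero.mp h))))
          = -(f.coeff (f.coeff.support.min' (Finsupp.support_nonempty_iff.mpr (fun h => hf (AddMonoidAlgebra.coeff_eq_zero.mp h))))) := rfl
      rw [this]
      omega
    have h5 := POS (-f) hnf hposval
    have h6 := hadd _ _ f h5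
    rw [zero_add, neg_add_cancel] at h6
    exact hirr 0 (htrans _ _ _ hrf h6)
  · intro hpos
    exact POS f hf hpos
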